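/- A pair of non-increasing sequences of nonnegative integers (P;Q) with P = (p_1,...,p_m) and Q = (q_1,...,q_n) is bigraphic (i.e., there exists a bipartite graph with partite sets X = {x_1,...,x_m}, Y = {y_1,...,y_n} such that deg(x_i) = p_i and deg(y_j) = q_j) if and only if the sums agree, i.e., Σ_{i=1}^m p_i = Σ_{i=1}^n q_i, and for each r with 1 ≤ r ≤ n, Σ_{i=1}^r q_i ≤ Σ_{i=1}^m min{p_i, r}. -/

import Mathlib

open Finset

/-- `Bigraphic p q`: there is a simple bipartite graph with parts of sizes `m` and `n`
whose degree sequences on the two parts are `p` and `q`, encoded via a 0/1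
biadjacency matrix. -/
def Bigraphic {m n : ℕ} (p : Fin m → ℕ) (q : Fin n → ℕ) : Prop :=
  ∃ M : Fin m → Fin n → Bool,
    (∀ i, (∑ j, if M i j then 1 else 0) = p i) ∧
    (∀ j, (∑ i, if M i j then 1 else 0) = q j)

/-- One can select `c` indices carrying the largest values of `f`, all positive,
provided there are at least `c` positive values. -/
private lemma gr_exists_top {m : ℕ} (f : Fin m → ℕ) (c : ℕ)
    (hc : c ≤ (univ.filter fun i => 1 ≤ f i).card) :
    ∃ S : Finset (Fin m), S.card = c ∧ (∀ i ∈ S, 1 ≤ f i) ∧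
      ∀ i ∈ S, ∀ j, j ∉ S → f j ≤ f i := by
  induction c with
  | zero => exact ⟨∅, by simp, by simp, by simp⟩
  | succ c ihc =>
    obtain ⟨S, hcard, h1, hmax⟩ := ihc (le_trans (Nat.le_succ c) hc)
    have hlt : S.card < (univ.filter fun i => 1 ≤ f i).card := by omega
    have hl : ∃ l, l ∈ (univ.filter fun i => 1 ≤ f i) ∧ l ∉ S := by
      by_contra h'
      push_neg at h'
      exact absurd (Finset.card_le_card h') (not_le.mpr hlt)
    obtain ⟨l, hl1, hlS⟩ := hl
    obtain ⟨j, hjmem, hjmax⟩ := Finset.exists_max_image (univ \ S) f ⟨l, by simp [hlS]⟩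
    have hjS : j ∉ S := (Finset.mem_sdiff.mp hjmem).2
    refine ⟨insert j S, ?_, ?_, ?_⟩
    · rw [Finset.card_insert_of_notMem hjS, hcard]
    · intro i hi
      rcases Finset.mem_insert.mp hi with rfl | hi
      · exact le_trans (Finset.mem_filter.mp hl1).2 (hjmax l (by simp [hlS]))
      · exact h1 i hi
    · intro i hi k hk
      have hkS : k ∉ S := fun h => hk (Finset.mem_insert_of_mem h)
      rcases Finset.mem_insert.mp hi with rfl | hi
      · exact hjmax k (by simp [hkS])
      · exact hmax i hi k hkS

/-- The backward (hard) direction of Gale–Ryser, with `p` not assumed sorted. -/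
private lemma gr_suff {m : ℕ} : ∀ (n : ℕ) (q : Fin n → ℕ), Antitone q →
    ∀ p : Fin m → ℕ, (∑ i, p i) = (∑ j, q j) →
    (∀ r : ℕ, 1 ≤ r → r ≤ n →
      (∑ j : Fin n, if (j : ℕ) < r then q j else 0) ≤ ∑ i : Fin m, min (p i) r) →
    Bigraphic p q := by
  intro n
  induction n with
  | zero =>
    intro q _ p hsum _
    refine ⟨fun _ => Fin.elim0, fun i => ?_, fun j => j.elim0⟩
    simp only [Finset.univ_eq_empty, Finset.sum_empty] at hsum ⊢
    exact ((Finset.sum_eq_zero_iff.mp hsum) i (Finset.mem_univ i)).symm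
  | succ n ih =>
    intro q hq p hsum hcond
    set qL := q (Fin.last n) with hqL
    -- every value of q is at least qL
    have hqge : ∀ j, qL ≤ q j := fun j => hq (Fin.le_last j)
    -- single-term sums
    have hsum_lt_succ : ∀ (r : ℕ) (hr : r < n + 1),
        (∑ j : Fin (n+1), if (j : ℕ) < r + 1 then q j else 0)
        = (∑ j : Fin (n+1), if (j : ℕ) < r then q j else 0) + q ⟨r, hr⟩ := by
      intro r hr
      have : ∀ j : Fin (n+1), (if (j : ℕ) < r + 1 then q j else 0)
          = (if (j : ℕ) < r then q j else 0) + (if j = ⟨r, hr⟩ then q j else 0) := by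
        intro j
        simp only [Fin.ext_iff]
        split_ifs <;> omega
      rw [Finset.sum_congr rfl fun j _ => this j, Finset.sum_add_distrib,
        Finset.sum_ite_eq' Finset.univ ⟨r, hr⟩ q]
      simp
    -- there are at least qL positive values of p
    have hpos : qL ≤ (univ.filter fun i => 1 ≤ p i).card := by
      have h1 := hcond 1 le_rfl (by omega)
      have hL : (∑ j : Fin (n+1), if (j : ℕ) < 1 then q j else 0) = q ⟨0, Nat.succ_pos n⟩ := by
        have h0 := hsum_lt_succ 0 (Nat.succ_pos n)
        simpa using h0
      have hR : (∑ i : Fin m, min (p i) 1) = (univ.filter fun i => 1 ≤ p i).card := by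
        rw [Finset.sum_congr rfl (fun i _ => show min (p i) 1 = if 1 ≤ p i then 1 else 0 by
          by_cases h : 1 ≤ p i <;> simp [h] <;> omega)]
        rw [Finset.sum_boole]
        simp
      rw [hL] at h1
      rw [hR] at h1
      exact le_trans (hqge _) h1
    obtain ⟨S, hScard, hS1, hSmax⟩ := gr_exists_top p qL hpos
    -- the reduced row degrees
    set p' : Fin m → ℕ := fun i => p i - (if i ∈ S then 1 else 0) with hp'
    have hp'add : ∀ i, p' i + (if i ∈ S then 1 else 0) = p i := by
      intro i
      by_cases h : i ∈ S
      · have := hS1 i h; simp [hp', h]; omega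
      · simp [hp', h]
    -- restricted column degrees
    set q' : Fin n → ℕ := fun j => q j.castSucc with hq'
    have hq'anti : Antitone q' := fun a b hab => hq (by simpa using hab)
    -- sum condition for the reduced problem
    have hsum' : (∑ i, p' i) = ∑ j, q' j := by
      have h1a : (∑ i, p' i) + (∑ i : Fin m, if i ∈ S then 1 else 0) = ∑ i, p i := by
        rw [← Finset.sum_add_distrib]
        exact Finset.sum_congr rfl fun i _ => hp'add i
      have h1b : (∑ i : Fin m, if i ∈ S then 1 else 0) = S.card := by
        rw [Finset.sum_boole]
        simp [Finset.filter_mem_eq_inter]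
      have h1 : (∑ i, p' i) + S.card = ∑ i, p i := by omega
      have h2 : (∑ j : Fin (n+1), q j) = (∑ j, q' j) + qL := Fin.sum_univ_castSucc q
      omega
    -- Gale–Ryser condition for the reduced problem
    have hcond' : ∀ r : ℕ, 1 ≤ r → r ≤ n →
        (∑ j : Fin n, if (j : ℕ) < r then q' j else 0) ≤ ∑ i : Fin m, min (p' i) r := by
      intro r hr1 hrn
      -- rewrite LHS as a sum over Fin (n+1)
      have hL : (∑ j : Fin n, if (j : ℕ) < r then q' j else 0)
          = ∑ j : Fin (n+1), if (j : ℕ) < r then q j else 0 := by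
        rw [Fin.sum_univ_castSucc (fun j : Fin (n+1) => if (j : ℕ) < r then q j else 0)]
        simp [hq', Nat.not_lt.mpr hrn]
      set k := (S.filter fun i => p i ≤ r).card with hk
      have hmin : ∀ i, min (p i) r = min (p' i) r + (if i ∈ S ∧ p i ≤ r then 1 else 0) := by
        intro i
        by_cases hiS : i ∈ S
        · have h1 := hS1 i hiS
          by_cases hir : p i ≤ r
          · simp [hp', hiS, hir]; omega
          · simp [hp', hiS, hir]; omega
        · simp [hp', hiS]
      have hsplit : (∑ i, min (p i) r) = (∑ i, min (p' i) r) + k := by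
        rw [Finset.sum_congr rfl fun i _ => hmin i, Finset.sum_add_distrib]
        rw [Finset.sum_boole, hk]
        have heq : univ.filter (fun i => i ∈ S ∧ p i ≤ r) = S.filter (fun i => p i ≤ r) := by
          ext i
          simp only [Finset.mem_filter, Finset.mem_univ, true_and]
        rw [heq]
        simp
      rw [hL]
      rcases Nat.eq_zero_or_pos k with hk0 | hkpos
      · have := hcond r hr1 (by omega)
        omega
      · -- some i₀ ∈ S with p i₀ ≤ r; then every j ∉ S has p j ≤ r
        have hex : ∃ i₀ ∈ S, p i₀ ≤ r := by
          obtain ⟨i₀, hi₀⟩ := Finset.card_pos.mp hkpos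
          exact ⟨i₀, (Finset.mem_filter.mp hi₀).1, (Finset.mem_filter.mp hi₀).2⟩
        obtain ⟨i₀, hi₀S, hi₀r⟩ := hex
        have hbig : ∀ i, r < p i → i ∈ S := by
          intro i hi
          by_contra hiS
          exact absurd (le_trans (hSmax i₀ hi₀S i hiS) hi₀r) (not_le.mpr hi)
        set t := (S.filter fun i => r < p i).card with ht
        have htk : t + k = qL := by
          have h0 := Finset.card_filter_add_card_filter_not (s := S)
            (p := fun i => r < p i)
          have h2 : S.filter (fun i => ¬ r < p i) = S.filter (fun i => p i ≤ r) := by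
            apply Finset.filter_congr
            intro i _
            simp [Nat.not_lt]
          rw [h2] at h0
          omega
        have ht' : (univ.filter fun i : Fin m => r < p i).card = t := by
          rw [ht]
          congr 1
          apply Finset.Subset.antisymm
          · intro i hi
            rw [Finset.mem_filter] at hi ⊢
            exact ⟨hbig i hi.2, hi.2⟩
          · intro i hi
            rw [Finset.mem_filter] at hi ⊢
            exact ⟨Finset.mem_univ i, hi.2⟩
        have hstep : (∑ i, min (p i) (r+1)) = (∑ i, min (p i) r) + t := by
          rw [← ht', Finset.sum_congr rfl (fun i _ =>
            show min (p i) (r+1) = min (p i) r + (if r < p i then 1 else 0) by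
              by_cases h : r < p i <;> simp [h] <;> omega),
            Finset.sum_add_distrib, Finset.sum_boole]
          simp
        have hcr1 := hcond (r+1) (by omega) (by omega)
        have hqr : qL ≤ q ⟨r, by omega⟩ := hqge _
        have hsl := hsum_lt_succ r (by omega)
        omega
    obtain ⟨M', hrow', hcol'⟩ := ih q' hq'anti p' hsum' hcond'
    refine ⟨fun i j => Fin.lastCases (if i ∈ S then true else false) (fun j' => M' i j') j,
      ?_, ?_⟩
    · intro i
      rw [Fin.sum_univ_castSucc]
      simp only [Fin.lastCases_castSucc, Fin.lastCases_last]
      rw [hrow' i]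
      by_cases h : i ∈ S
      · simp only [h, if_true]
        have := hS1 i h
        simp [hp', h]
        omega
      · simp [hp', h]
    · intro j
      induction j using Fin.lastCases with
      | last =>
        simp only [Fin.lastCases_last]
        rw [show (∑ i : Fin m, if (if i ∈ S then true else false) = true then 1 else 0)
            = ∑ i : Fin m, if i ∈ S then 1 else 0 by
          apply Finset.sum_congr rfl; intro i _; by_cases h : i ∈ S <;> simp [h]]
        rw [Finset.sum_boole]
        simp [hScard]
        exact hqL
      | cast j' =>
        simp only [Fin.lastCases_castSucc]
        exact hcol' j'

/-- Gale–Ryser theorem. -/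
theorem gale_ryser {m n : ℕ} (p : Fin m → ℕ) (q : Fin n → ℕ)
    (hp : Antitone p) (hq : Antitone q) :
    Bigraphic p q ↔
      ((∑ i, p i) = ∑ j, q j ∧
        ∀ r : ℕ, 1 ≤ r → r ≤ n →
          (∑ j : Fin n, if (j : ℕ) < r then q j else 0) ≤ ∑ i : Fin m, min (p i) r) := by
  constructor
  · rintro ⟨M, hrow, hcol⟩
    constructor
    · calc (∑ i, p i) = ∑ i, ∑ j, (if M i j then 1 else 0) := by
            exact Finset.sum_congr rfl fun i _ => (hrow i).symm
        _ = ∑ j, ∑ i, (if M i j then 1 else 0) := Finset.sum_comm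
        _ = ∑ j, q j := Finset.sum_congr rfl fun j _ => hcol j
    · intro r hr1 hrn
      have key : (∑ j : Fin n, if (j : ℕ) < r then q j else 0)
          = ∑ i : Fin m, ∑ j : Fin n, (if (j : ℕ) < r ∧ M i j then 1 else 0) := by
        rw [Finset.sum_comm]
        apply Finset.sum_congr rfl
        intro j _
        by_cases h : (j : ℕ) < r
        · simp only [h, if_true, true_and]
          exact (hcol j).symm
        · simp [h]
      rw [key]
      apply Finset.sum_le_sum
      intro i _
      apply le_min
      · rw [← hrow i]
        apply Finset.sum_le_sum
        intro j _
        split_ifs <;> simp_all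
      · calc (∑ j : Fin n, if (j : ℕ) < r ∧ M i j then 1 else 0)
            ≤ ∑ j : Fin n, (if (j : ℕ) < r then 1 else 0) := by
              apply Finset.sum_le_sum
              intro j _
              split_ifs <;> simp_all
          _ ≤ r := by
              rw [Finset.sum_boole]
              norm_cast
              have : (univ.filter fun j : Fin n => (j : ℕ) < r).card
                  ≤ (Finset.range r).card := by
                refine Finset.card_le_card_of_injOn (fun j => (j : ℕ)) ?_ ?_
                · intro j hj
                  rw [Finset.mem_coe, Finset.mem_filter] at hj
                  exact Finset.mem_range.mpr hj.2
                · intro a _ b _ hab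
                  exact Fin.ext hab
              simpa using this
  · rintro ⟨hsum, hcond⟩
    exact gr_suff n q hq p hsum hcond
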